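/- Let R be an integral domain which is a ℚ-algebra and α ∈ R. Then for every n ≥ 1, the n-th autonomous polynomial of the series e^{αX} = rescale α exp is A_n(rescale α exp) = α^{n−1} · (n−1)! · rescale (n·α) exp; that is, the autonomous operator sends the Hurwitz expansion of e^{αX} to the sequence (α^{n−1}(n−1)! e^{nαX})_{n≥1}. -/

import Mathlib

open PowerSeries

/-- The autonomous polynomials of a power series: `A_1(f) = f` and
`A_{n+1}(f) = f·δ(A_n(f))`.  Here `autPolyPS f m` is `A_{m+1}(f)`. -/
noncomputable def autPolyPS {R : Type*} [CommRing R] (f : PowerSeries R) :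
    ℕ → PowerSeries R
  | 0 => f
  | m + 1 => f * derivativeFun (autPolyPS f m)

lemma derivativeFun_rescale_exp {R : Type*} [CommRing R] [Algebra ℚ R] (a : R) :
    derivativeFun (rescale a (exp R)) = PowerSeries.C a * rescale a (exp R) := by
  ext n
  change coeff n (d⁄dX R (rescale a (exp R))) = _
  rw [coeff_derivative, coeff_C_mul, coeff_rescale, coeff_rescale, coeff_exp, coeff_exp]
  have h : ((n : R) + 1) = algebraMap ℚ R ((n : ℚ) + 1) := by
    simp
  rw [h, mul_assoc, ← map_mul, pow_succ]
  have h2 : ((1 : ℚ) / (n + 1).factorial) * ((n : ℚ) + 1) = 1 / n.factorial := by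
    have h0 : ((n.factorial : ℚ)) ≠ 0 := by positivity
    have h1 : (((n + 1).factorial : ℚ)) ≠ 0 := by positivity
    rw [Nat.factorial_succ]
    push_cast
    field_simp
  rw [h2]
  ring

lemma autPolyPS_exp_rescale_aux {R : Type*} [CommRing R] [Algebra ℚ R] (α : R) :
    ∀ m : ℕ, autPolyPS (rescale α (exp R)) m =
      PowerSeries.C α ^ m * (m.factorial : PowerSeries R) *
        rescale (((m + 1 : ℕ) : R) * α) (exp R) := by
  intro m
  induction m with
  | zero => simp [autPolyPS]
  | succ m ih =>
    rw [autPolyPS, ih]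
    rw [derivativeFun_mul, derivativeFun_rescale_exp]
    have hc : derivativeFun (PowerSeries.C α ^ m * ((m.factorial : ℕ) : PowerSeries R)) = 0 := by
      have : PowerSeries.C α ^ m * ((m.factorial : ℕ) : PowerSeries R)
          = PowerSeries.C (α ^ m * (m.factorial : R)) := by
        simp [map_mul, map_pow]
      rw [this]
      exact derivative_C
    rw [hc, smul_zero, add_zero, smul_eq_mul]
    have key : rescale α (exp R) * rescale (((m + 1 : ℕ) : R) * α) (exp R)
        = rescale (((m + 1 + 1 : ℕ) : R) * α) (exp R) := by
      rw [exp_mul_exp_eq_exp_add]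
      congr 1
      push_cast
      ring
    calc rescale α (exp R) *
        (PowerSeries.C α ^ m * ((m.factorial : ℕ) : PowerSeries R) *
          (PowerSeries.C (((m + 1 : ℕ) : R) * α) * rescale (((m + 1 : ℕ) : R) * α) (exp R)))
        = (PowerSeries.C α ^ m * ((m.factorial : ℕ) : PowerSeries R) *
            PowerSeries.C (((m + 1 : ℕ) : R) * α)) *
          (rescale α (exp R) * rescale (((m + 1 : ℕ) : R) * α) (exp R)) := by ring
      _ = PowerSeries.C α ^ (m + 1) * (((m + 1).factorial : ℕ) : PowerSeries R) *
          rescale (((m + 1 + 1 : ℕ) : R) * α) (exp R) := by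
          rw [key]
          congr 1
          rw [map_mul, pow_succ, Nat.factorial_succ]
          simp only [Nat.cast_mul, Nat.cast_add, Nat.cast_one, map_natCast, map_add, map_one]
          ring

/-- For an integral domain `R` which is a `ℚ`-algebra and `α ∈ R`, the `n`-th autonomous
polynomial of `e^{αX} = rescale α exp` is `α^{n-1}·(n-1)!·e^{nαX}`. -/
theorem autPolyPS_exp_rescale {R : Type*} [CommRing R] [IsDomain R] [Algebra ℚ R] (α : R) :
    ∀ n : ℕ, 1 ≤ n →
      autPolyPS (rescale α (exp R)) (n - 1) =
        PowerSeries.C α ^ (n - 1) * ((n - 1).factorial : PowerSeries R) *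
          rescale ((n : R) * α) (exp R) := by
  intro n hn
  obtain ⟨m, rfl⟩ := Nat.exists_eq_add_of_le hn
  rw [Nat.add_comm 1 m]
  simpa using autPolyPS_exp_rescale_aux α m
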